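/- Assume the constrained dual LP is feasible. Let (d*, p*) be an optimal solution of the constrained dual LP with derived policy π*(a|s) = p*(s,a)/d*(s), and let (v*, q*, w*) be an optimal solution of the constrained primal LP. Then for every k with ν_k^{π*} > V_k (a strictly satisfied constraint), the optimal multiplier satisfies w_k* = 0; that is, the optimal modified reward r*_CRL = r + Σ_k w_k* r_k is only altered by the tight constraints ν_k^{π*} = V_k. -/

import Mathlib

open Finset

section MDPDefs

variable {S A : Type*}

/-- A (stationary, stochastic) policy on finite state/action spaces. -/
def IsPolicy [Fintype A] (π : S → A → ℝ) : Prop :=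
  (∀ s a, 0 ≤ π s a) ∧ ∀ s, ∑ a, π s a = 1

/-- `d` is the (discounted) state visitation density of the policy `π`:
it satisfies `d(s) = (1-γ)ι(s) + γ Σ_{s',a'} d(s') π(a'|s') τ(s|s',a')`. -/
def IsVisit [Fintype S] [Fintype A] (ι : S → ℝ) (τ : S → A → S → ℝ) (γ : ℝ)
    (π : S → A → ℝ) (d : S → ℝ) : Prop :=
  ∀ s, d s = (1 - γ) * ι s + γ * ∑ s', ∑ a', d s' * π s' a' * τ s' a' s

/-- Feasibility for the value-learning dual LP. -/
def DualFeas [Fintype S] [Fintype A] (ι : S → ℝ) (τ : S → A → S → ℝ) (γ : ℝ)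
    (d : S → ℝ) (p : S → A → ℝ) : Prop :=
  (∀ s, ∑ a, p s a = d s) ∧
  (∀ s, d s = (1 - γ) * ι s + γ * ∑ s', ∑ a', p s' a' * τ s' a' s) ∧
  ∀ s a, 0 ≤ p s a

/-- The dual objective: the average reward under the state-action density `p`,
`Σ_{s,a} p(s,a) Σ_{s'} τ(s'|s,a) r(s,a,s')`. -/
def DualObj [Fintype S] [Fintype A] (τ : S → A → S → ℝ) (r : S → A → S → ℝ)
    (p : S → A → ℝ) : ℝ :=
  ∑ s, ∑ a, p s a * ∑ s', τ s a s' * r s a s'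

/-- The standing MDP assumptions: `ι` is an everywhere-positive initial-state
distribution, `τ(·|s,a)` are transition probabilities and `γ ∈ [0,1)`. -/
def IsMDP [Fintype S] [Fintype A] (ι : S → ℝ) (τ : S → A → S → ℝ) (γ : ℝ) : Prop :=
  (∀ s, 0 < ι s) ∧ (∑ s, ι s = 1) ∧
  (∀ s a s', 0 ≤ τ s a s') ∧ (∀ s a, ∑ s', τ s a s' = 1) ∧
  0 ≤ γ ∧ γ < 1

end MDPDefs

section FarkasCRL

variable {m : Type*} [Fintype m]

/-- Euclidean dot product on `m → ℝ`. -/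
def dotp (u v : m → ℝ) : ℝ := ∑ i, u i * v i

lemma dotp_sub_smul_left (u v y : m → ℝ) (c : ℝ) :
    dotp (fun j => u j - c * v j) y = dotp u y - c * dotp v y := by
  simp [dotp, sub_mul, Finset.sum_sub_distrib, Finset.mul_sum, mul_assoc]

lemma dotp_sub_smul_right (u y z : m → ℝ) (c : ℝ) :
    dotp u (fun j => y j - c * z j) = dotp u y - c * dotp u z := by
  simp [dotp, mul_sub, Finset.sum_sub_distrib, Finset.mul_sum, mul_left_comm]

/-- Homogeneous Farkas lemma, by induction on the generator set. -/
theorem farkas_finset {ι : Type*} (T : Finset ι) :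
    ∀ (g : ι → m → ℝ) (b : m → ℝ),
      (∃ x : ι → ℝ, (∀ i, 0 ≤ x i) ∧ ∀ j, ∑ i ∈ T, x i * g i j = b j) ∨
      (∃ y : m → ℝ, (∀ i ∈ T, 0 ≤ dotp (g i) y) ∧ dotp b y < 0) := by
  classical
  induction T using Finset.induction_on with
  | empty =>
      intro g b
      by_cases hb : ∀ j, b j = 0
      · exact Or.inl ⟨fun _ => 0, fun _ => le_refl _, by simp [hb]⟩
      · push_neg at hb
        obtain ⟨j0, hj0⟩ := hb
        refine Or.inr ⟨fun j => -b j, by simp, ?_⟩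
        have h1 : dotp b (fun j => -b j) = -∑ j, b j * b j := by
          simp [dotp]
        have h2 : 0 < ∑ j, b j * b j :=
          Finset.sum_pos' (fun i _ => mul_self_nonneg _)
            ⟨j0, Finset.mem_univ _, mul_self_pos.mpr hj0⟩
        rw [h1]; linarith
  | @insert a T ha IH =>
      intro g b
      rcases IH g b with ⟨x, hx, hsum⟩ | ⟨y, hy, hby⟩
      · refine Or.inl ⟨Function.update x a 0, ?_, ?_⟩
        · intro i
          rcases eq_or_ne i a with rfl | hne
          · simp
          · simpa [Function.update_apply, hne] using hx i
        · intro j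
          rw [Finset.sum_insert ha]
          have : ∑ i ∈ T, Function.update x a 0 i * g i j = ∑ i ∈ T, x i * g i j := by
            refine Finset.sum_congr rfl fun i hi => ?_
            have : i ≠ a := fun h => ha (h ▸ hi)
            simp [Function.update_apply, this]
          simp [this, hsum j]
      · by_cases hga : 0 ≤ dotp (g a) y
        · refine Or.inr ⟨y, ?_, hby⟩
          intro i hi
          rcases Finset.mem_insert.mp hi with rfl | hi'
          · exact hga
          · exact hy i hi'
        · push_neg at hga
          have hα : dotp (g a) y ≠ 0 := ne_of_lt hga
          set α := dotp (g a) y with hαdef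
          rcases IH (fun i => fun j => g i j - (dotp (g i) y / α) * g a j)
              (fun j => b j - (dotp b y / α) * g a j) with
            ⟨x, hx, hsum⟩ | ⟨y', hy', hby'⟩
          · set c : ℝ := dotp b y / α - ∑ i ∈ T, x i * (dotp (g i) y / α) with hc
            have hcpos : 0 < c := by
              have h1 : 0 < dotp b y / α := div_pos_of_neg_of_neg hby hga
              have h2 : ∑ i ∈ T, x i * (dotp (g i) y / α) ≤ 0 := by
                refine Finset.sum_nonpos fun i hi => ?_
                have : dotp (g i) y / α ≤ 0 :=
                  div_nonpos_of_nonneg_of_nonpos (hy i hi) (le_of_lt hga)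
                exact mul_nonpos_of_nonneg_of_nonpos (hx i) this
              rw [hc]; linarith
            refine Or.inl ⟨Function.update x a c, ?_, ?_⟩
            · intro i
              rcases eq_or_ne i a with rfl | hne
              · simp [le_of_lt hcpos]
              · simpa [Function.update_apply, hne] using hx i
            · intro j
              rw [Finset.sum_insert ha]
              have hTT : ∑ i ∈ T, Function.update x a c i * g i j
                  = ∑ i ∈ T, x i * g i j := by
                refine Finset.sum_congr rfl fun i hi => ?_
                have : i ≠ a := fun h => ha (h ▸ hi)
                simp [Function.update_apply, this]
              have hs := hsum j
              have hexp : ∑ i ∈ T, x i * (g i j - dotp (g i) y / α * g a j)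
                  = ∑ i ∈ T, x i * g i j
                    - (∑ i ∈ T, x i * (dotp (g i) y / α)) * g a j := by
                rw [Finset.sum_mul, ← Finset.sum_sub_distrib]
                exact Finset.sum_congr rfl fun i _ => by ring
              rw [hexp] at hs
              rw [hTT, Function.update_self, hc]
              linear_combination hs
          · refine Or.inr ⟨fun j => y' j - (dotp (g a) y' / α) * y j, ?_, ?_⟩
            · intro i hi
              rw [dotp_sub_smul_right]
              rcases Finset.mem_insert.mp hi with rfl | hi'
              · rw [div_mul_cancel₀ _ hα]; simp
              · have h := hy' i hi'
                have hdot : dotp (fun j => g i j - dotp (g i) y / α * g a j) y'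
                    = dotp (g i) y' - dotp (g a) y' / α * dotp (g i) y := by
                  rw [dotp_sub_smul_left]; ring
                rw [hdot] at h
                exact h
            · rw [dotp_sub_smul_right]
              have hdot : dotp (fun j => b j - dotp b y / α * g a j) y'
                  = dotp b y' - dotp (g a) y' / α * dotp b y := by
                rw [dotp_sub_smul_left]; ring
              rw [hdot] at hby'
              exact hby'

/-- Farkas alternative for affine inequality systems `⟨g i, y⟩ ≥ h i`. -/
theorem farkas_affine {ι : Type*} [Fintype ι] (g : ι → m → ℝ) (h : ι → ℝ) :
    (∃ y : m → ℝ, ∀ i, h i ≤ ∑ j, g i j * y j) ∨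
    (∃ x : ι → ℝ, (∀ i, 0 ≤ x i) ∧ (∀ j, ∑ i, x i * g i j = 0) ∧ 0 < ∑ i, x i * h i) := by
  classical
  rcases farkas_finset (m := Option m) Finset.univ
      (fun i (o : Option m) => o.elim (h i) (g i))
      (fun o : Option m => o.elim 1 0) with ⟨x, hx, hrow⟩ | ⟨yh, hyh, hby⟩
  · refine Or.inr ⟨x, hx, ?_, ?_⟩
    · intro j
      simpa using hrow (some j)
    · have := hrow none
      simp at this
      rw [this]; norm_num
  · refine Or.inl ?_
    have ht : yh none < 0 := by
      have : dotp (fun o : Option m => o.elim 1 0) yh = yh none := by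
        simp [dotp, Fintype.sum_option]
      rwa [this] at hby
    refine ⟨fun j => yh (some j) / (-(yh none)), fun i => ?_⟩
    have hconstr := hyh i (Finset.mem_univ i)
    have hd : dotp (fun o : Option m => o.elim (h i) (g i)) yh
        = h i * yh none + ∑ j, g i j * yh (some j) := by
      simp [dotp, Fintype.sum_option]
    rw [hd] at hconstr
    have hsum : ∑ j, g i j * (yh (some j) / (-(yh none)))
        = (∑ j, g i j * yh (some j)) / (-(yh none)) := by
      rw [Finset.sum_div]
      exact Finset.sum_congr rfl fun j _ => by ring
    rw [hsum, le_div_iff₀ (by linarith)]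
    nlinarith [hconstr]

end FarkasCRL

section Helpers

lemma expand_q {S A : Type*} [Fintype S] [Fintype A] {K : ℕ}
    (τ : S → A → S → ℝ) (r : S → A → S → ℝ) (rk : Fin K → S → A → S → ℝ)
    (γ : ℝ) (v : S → ℝ) (w : Fin K → ℝ) (s : S) (a : A) :
    ∑ s', τ s a s' * (r s a s' + (∑ k, w k * rk k s a s') + γ * v s')
      = (∑ s', τ s a s' * r s a s')
        + (∑ k, w k * ∑ s', τ s a s' * rk k s a s')
        + γ * ∑ s', τ s a s' * v s' := by
  have hB : ∑ s', τ s a s' * ∑ k, w k * rk k s a s'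
      = ∑ k, w k * ∑ s', τ s a s' * rk k s a s' := by
    simp_rw [Finset.mul_sum]
    rw [Finset.sum_comm]
    exact Finset.sum_congr rfl fun k _ => Finset.sum_congr rfl fun s' _ => by ring
  have hC : ∑ s', τ s a s' * (γ * v s') = γ * ∑ s', τ s a s' * v s' := by
    rw [Finset.mul_sum]
    exact Finset.sum_congr rfl fun s' _ => by ring
  simp only [mul_add, Finset.sum_add_distrib, hB, hC]

lemma swap3 {S A : Type*} [Fintype S] [Fintype A] (p : S → A → ℝ) (τ : S → A → S → ℝ)
    (v : S → ℝ) :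
    ∑ s, (∑ s', ∑ a', p s' a' * τ s' a' s) * v s
      = ∑ s, ∑ a, p s a * (∑ s', τ s a s' * v s') := by
  simp_rw [Finset.sum_mul, Finset.mul_sum]
  rw [Finset.sum_comm]
  refine Finset.sum_congr rfl fun s _ => ?_
  rw [Finset.sum_comm]
  exact Finset.sum_congr rfl fun a _ => Finset.sum_congr rfl fun s' _ => by ring

lemma weak_duality {S A : Type*} [Fintype S] [Fintype A] {K : ℕ}
    (ι : S → ℝ) (τ : S → A → S → ℝ) (γ : ℝ) (r : S → A → S → ℝ)
    (rk : Fin K → S → A → S → ℝ)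
    (d : S → ℝ) (p : S → A → ℝ) (v : S → ℝ) (q : S → A → ℝ) (w : Fin K → ℝ)
    (hd1 : ∀ s, ∑ a, p s a = d s)
    (hd2 : ∀ s, d s = (1 - γ) * ι s + γ * ∑ s', ∑ a', p s' a' * τ s' a' s)
    (hp0 : ∀ s a, 0 ≤ p s a)
    (hq1 : ∀ s a, q s a ≤ v s)
    (hq2 : ∀ s a, q s a = ∑ s', τ s a s' *
      (r s a s' + (∑ k, w k * rk k s a s') + γ * v s')) :
    DualObj τ r p + (∑ k, w k * DualObj τ (rk k) p) ≤ (1 - γ) * ∑ s, ι s * v s := by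
  have E1 : ∑ s, d s * v s = ∑ s, ∑ a, p s a * v s := by
    refine Finset.sum_congr rfl fun s _ => ?_
    rw [← hd1 s, Finset.sum_mul]
  have E2 : ∑ s, d s * v s = (1 - γ) * ∑ s, ι s * v s
      + γ * ∑ s, ∑ a, p s a * (∑ s', τ s a s' * v s') := by
    calc ∑ s, d s * v s
        = ∑ s, ((1 - γ) * ι s * v s
            + γ * ((∑ s', ∑ a', p s' a' * τ s' a' s) * v s)) := by
          refine Finset.sum_congr rfl fun s _ => ?_
          rw [hd2 s]; ring
      _ = (1 - γ) * ∑ s, ι s * v s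
            + γ * ∑ s, (∑ s', ∑ a', p s' a' * τ s' a' s) * v s := by
          rw [Finset.sum_add_distrib, Finset.mul_sum, Finset.mul_sum]
          congr 1
          exact Finset.sum_congr rfl fun s _ => by ring
      _ = (1 - γ) * ∑ s, ι s * v s
            + γ * ∑ s, ∑ a, p s a * (∑ s', τ s a s' * v s') := by
          rw [swap3]
  have E3 : ∑ s, ∑ a, p s a * q s a ≤ ∑ s, ∑ a, p s a * v s := by
    refine Finset.sum_le_sum fun s _ => Finset.sum_le_sum fun a _ => ?_
    exact mul_le_mul_of_nonneg_left (hq1 s a) (hp0 s a)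
  have E4 : ∑ s, ∑ a, p s a * q s a
      = DualObj τ r p + (∑ k, w k * DualObj τ (rk k) p)
        + γ * ∑ s, ∑ a, p s a * (∑ s', τ s a s' * v s') := by
    have hterm : ∀ s a, p s a * q s a
        = p s a * (∑ s', τ s a s' * r s a s')
          + (∑ k, w k * (p s a * ∑ s', τ s a s' * rk k s a s'))
          + γ * (p s a * ∑ s', τ s a s' * v s') := by
      intro s a
      have hswap : p s a * ∑ k, w k * ∑ s', τ s a s' * rk k s a s'
          = ∑ k, w k * (p s a * ∑ s', τ s a s' * rk k s a s') := by
        rw [Finset.mul_sum]; exact Finset.sum_congr rfl fun k _ => by ring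
      rw [hq2 s a, expand_q, mul_add, mul_add, hswap]
      ring
    have hmid : ∑ s, ∑ a, ∑ k, w k * (p s a * ∑ s', τ s a s' * rk k s a s')
        = ∑ k, w k * DualObj τ (rk k) p := by
      calc ∑ s, ∑ a, ∑ k, w k * (p s a * ∑ s', τ s a s' * rk k s a s')
          = ∑ s, ∑ k, ∑ a, w k * (p s a * ∑ s', τ s a s' * rk k s a s') :=
            Finset.sum_congr rfl fun s _ => Finset.sum_comm
        _ = ∑ k, ∑ s, ∑ a, w k * (p s a * ∑ s', τ s a s' * rk k s a s') :=
            Finset.sum_comm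
        _ = ∑ k, w k * DualObj τ (rk k) p := by
            refine Finset.sum_congr rfl fun k _ => ?_
            unfold DualObj
            rw [Finset.mul_sum]
            refine Finset.sum_congr rfl fun s _ => ?_
            rw [Finset.mul_sum]
    have hthird : ∑ s, ∑ a, γ * (p s a * ∑ s', τ s a s' * v s')
        = γ * ∑ s, ∑ a, p s a * ∑ s', τ s a s' * v s' := by
      rw [Finset.mul_sum]
      exact Finset.sum_congr rfl fun s _ => by rw [Finset.mul_sum]
    calc ∑ s, ∑ a, p s a * q s a
        = ∑ s, ∑ a, (p s a * (∑ s', τ s a s' * r s a s')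
            + (∑ k, w k * (p s a * ∑ s', τ s a s' * rk k s a s'))
            + γ * (p s a * ∑ s', τ s a s' * v s')) :=
          Finset.sum_congr rfl fun s _ => Finset.sum_congr rfl fun a _ => hterm s a
      _ = DualObj τ r p + (∑ k, w k * DualObj τ (rk k) p)
            + γ * ∑ s, ∑ a, p s a * (∑ s', τ s a s' * v s') := by
          simp only [Finset.sum_add_distrib]
          rw [hmid, hthird]
          rfl
  linarith [E1, E2, E3, E4]

end Helpers

/-- given optimal solutions of the (feasible) constrained dual and primal
LPs, every strictly satisfied constraint `ν_k^{π*} > V_k` has optimal multiplier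
`w_k* = 0`; the optimal modified reward is only altered by tight constraints. -/
theorem crl_complementary_slackness
    {S A : Type*} [Fintype S] [Fintype A] [Nonempty S] [Nonempty A]
    (ι : S → ℝ) (τ : S → A → S → ℝ) (γ : ℝ) (r : S → A → S → ℝ)
    (hMDP : IsMDP ι τ γ)
    {K : ℕ} (rk : Fin K → S → A → S → ℝ) (V : Fin K → ℝ)
    (dStar : S → ℝ) (pStar : S → A → ℝ)
    (hDFeas : DualFeas ι τ γ dStar pStar ∧
      ∀ k, (1 - γ) * V k ≤ DualObj τ (rk k) pStar)
    (hDOpt : ∀ (d : S → ℝ) (p : S → A → ℝ),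
      (DualFeas ι τ γ d p ∧ ∀ k, (1 - γ) * V k ≤ DualObj τ (rk k) p) →
      DualObj τ r p ≤ DualObj τ r pStar)
    (vStar : S → ℝ) (qStar : S → A → ℝ) (wStar : Fin K → ℝ)
    (hPFeas : (∀ s a, qStar s a ≤ vStar s) ∧
      (∀ s a, qStar s a = ∑ s', τ s a s' *
        (r s a s' + (∑ k, wStar k * rk k s a s') + γ * vStar s')) ∧
      ∀ k, 0 ≤ wStar k)
    (hPOpt : ∀ (v : S → ℝ) (q : S → A → ℝ) (w : Fin K → ℝ),
      ((∀ s a, q s a ≤ v s) ∧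
        (∀ s a, q s a = ∑ s', τ s a s' *
          (r s a s' + (∑ k, w k * rk k s a s') + γ * v s')) ∧
        ∀ k, 0 ≤ w k) →
      (∑ s, ι s * ((1 - γ) * vStar s)) - ∑ k, wStar k * ((1 - γ) * V k) ≤
        (∑ s, ι s * ((1 - γ) * v s)) - ∑ k, w k * ((1 - γ) * V k)) :
    ∀ k, V k < (1 - γ)⁻¹ * DualObj τ (rk k) pStar → wStar k = 0 := by
  classical
  obtain ⟨⟨hd1, hd2, hp0⟩, hDc⟩ := hDFeas
  obtain ⟨hq1, hq2, hw0⟩ := hPFeas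
  obtain ⟨hι, hιsum, hτ0, hτ1, hγ0, hγ1⟩ := hMDP
  have hγpos : (0:ℝ) < 1 - γ := by linarith
  -- Step 1 (strong duality direction): the primal optimal value is at most the
  -- dual optimal value, proved via the Farkas alternative.
  have hPD : (∑ s, ι s * ((1 - γ) * vStar s)) - ∑ k, wStar k * ((1 - γ) * V k)
      ≤ DualObj τ r pStar := by
    rcases farkas_affine (m := S ⊕ Fin K) (ι := Option ((S × A) ⊕ Fin K))
        (fun i => i.elim
          (Sum.elim (fun s0 => -((1 - γ) * ι s0)) (fun k => -((1 - γ) * V k)))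
          (Sum.elim
            (fun sa => Sum.elim
              (fun s0 => (if s0 = sa.1 then (1:ℝ) else 0) - γ * τ sa.1 sa.2 s0)
              (fun k => ∑ s', τ sa.1 sa.2 s' * rk k sa.1 sa.2 s'))
            (fun k => Sum.elim (fun _ => (0:ℝ))
              (fun k' => if k' = k then (-1:ℝ) else 0))))
        (fun i => i.elim (-(DualObj τ r pStar))
          (Sum.elim (fun sa => ∑ s', τ sa.1 sa.2 s' * r sa.1 sa.2 s') (fun _ => 0)))
      with ⟨y, hy⟩ | ⟨x, hx0, hrows, hobj⟩
    · -- a primal feasible point with objective value at most the dual value exists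
      have hw : ∀ k, y (Sum.inr k) ≤ 0 := by
        intro k
        have h := hy (some (Sum.inr k))
        simp only [Option.elim_some, Sum.elim_inl, Sum.elim_inr,
          Fintype.sum_sum_type, zero_mul, Finset.sum_const_zero, zero_add] at h
        have e : ∑ k', (if k' = k then (-1:ℝ) else 0) * y (Sum.inr k')
            = -(y (Sum.inr k)) := by simp
        rw [e] at h
        linarith
      have hcol : ∀ s a, (∑ s', τ s a s' * r s a s')
          + (∑ k, (-(y (Sum.inr k))) * ∑ s', τ s a s' * rk k s a s')
          + γ * ∑ s', τ s a s' * y (Sum.inl s') ≤ y (Sum.inl s) := by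
        intro s a
        have h := hy (some (Sum.inl (s, a)))
        simp only [Option.elim_some, Sum.elim_inl, Sum.elim_inr,
          Fintype.sum_sum_type] at h
        have e1 : ∑ s0, ((if s0 = s then (1:ℝ) else 0) - γ * τ s a s0) * y (Sum.inl s0)
            = y (Sum.inl s) - γ * ∑ s', τ s a s' * y (Sum.inl s') := by
          simp only [sub_mul, Finset.sum_sub_distrib]
          congr 1
          · simp
          · rw [Finset.mul_sum]
            exact Finset.sum_congr rfl fun s' _ => by ring
        have e2 : ∑ k, (∑ s', τ s a s' * rk k s a s') * y (Sum.inr k)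
            = -∑ k, (-(y (Sum.inr k))) * ∑ s', τ s a s' * rk k s a s' := by
          rw [← Finset.sum_neg_distrib]
          exact Finset.sum_congr rfl fun k _ => by ring
        rw [e1, e2] at h
        linarith
      have hbnd : ∑ s, (1 - γ) * ι s * y (Sum.inl s)
          - ∑ k, (-(y (Sum.inr k))) * ((1 - γ) * V k) ≤ DualObj τ r pStar := by
        have h := hy none
        simp only [Option.elim_none, Sum.elim_inl, Sum.elim_inr,
          Fintype.sum_sum_type] at h
        have e1 : ∑ s, -((1 - γ) * ι s) * y (Sum.inl s)
            = -∑ s, (1 - γ) * ι s * y (Sum.inl s) := by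
          rw [← Finset.sum_neg_distrib]
          exact Finset.sum_congr rfl fun s _ => by ring
        have e2 : ∑ k, -((1 - γ) * V k) * y (Sum.inr k)
            = ∑ k, (-(y (Sum.inr k))) * ((1 - γ) * V k) :=
          Finset.sum_congr rfl fun k _ => by ring
        rw [e1, e2] at h
        linarith
      have hP := hPOpt (fun s => y (Sum.inl s))
        (fun s a => ∑ s', τ s a s' * (r s a s'
          + (∑ k, (-(y (Sum.inr k))) * rk k s a s') + γ * y (Sum.inl s')))
        (fun k => -(y (Sum.inr k)))
        ⟨by
          intro s a
          show ∑ s', τ s a s' * (r s a s'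
            + (∑ k, (-(y (Sum.inr k))) * rk k s a s') + γ * y (Sum.inl s'))
            ≤ y (Sum.inl s)
          rw [expand_q τ r rk γ (fun s => y (Sum.inl s)) (fun k => -(y (Sum.inr k))) s a]
          exact hcol s a,
         fun s a => rfl,
         fun k => neg_nonneg.mpr (hw k)⟩
      have e3 : ∑ s, ι s * ((1 - γ) * y (Sum.inl s))
          = ∑ s, (1 - γ) * ι s * y (Sum.inl s) :=
        Finset.sum_congr rfl fun s _ => by ring
      linarith [hP, hbnd, e3]
    · -- the alternative certificate contradicts dual optimality
      exfalso
      have hμ0 : 0 ≤ x none := hx0 none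
      have hrowS : ∀ s0 : S, ∑ a, x (some (Sum.inl (s0, a)))
          = x none * ((1 - γ) * ι s0)
            + γ * ∑ s, ∑ a, x (some (Sum.inl (s, a))) * τ s a s0 := by
        intro s0
        have h := hrows (Sum.inl s0)
        simp only [Fintype.sum_option, Fintype.sum_sum_type, Fintype.sum_prod_type,
          Option.elim_none, Option.elim_some, Sum.elim_inl, Sum.elim_inr,
          mul_zero, Finset.sum_const_zero, add_zero, mul_neg] at h
        have e1 : ∑ s, ∑ a, x (some (Sum.inl (s, a)))
              * ((if s0 = s then (1:ℝ) else 0) - γ * τ s a s0)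
            = ∑ a, x (some (Sum.inl (s0, a)))
              - γ * ∑ s, ∑ a, x (some (Sum.inl (s, a))) * τ s a s0 := by
          simp only [mul_sub, Finset.sum_sub_distrib]
          congr 1
          · have e : ∀ s : S, ∑ a, x (some (Sum.inl (s, a)))
                * (if s0 = s then (1:ℝ) else 0)
                = if s0 = s then ∑ a, x (some (Sum.inl (s, a))) else 0 := by
              intro s
              by_cases hss : s0 = s <;> simp [hss]
            rw [Finset.sum_congr rfl fun s _ => e s, Finset.sum_ite_eq]
            simp
          · rw [Finset.mul_sum]
            refine Finset.sum_congr rfl fun s _ => ?_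
            rw [Finset.mul_sum]
            exact Finset.sum_congr rfl fun a _ => by ring
        rw [e1] at h
        linarith
      have hrowK : ∀ k, ∑ s, ∑ a, x (some (Sum.inl (s, a)))
            * ∑ s', τ s a s' * rk k s a s'
          = x (some (Sum.inr k)) + x none * ((1 - γ) * V k) := by
        intro k
        have h := hrows (Sum.inr k)
        simp only [Fintype.sum_option, Fintype.sum_sum_type, Fintype.sum_prod_type,
          Option.elim_none, Option.elim_some, Sum.elim_inl, Sum.elim_inr,
          mul_neg] at h
        have e2 : ∑ k', x (some (Sum.inr k')) * (if k = k' then (-1:ℝ) else 0)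
            = -(x (some (Sum.inr k))) := by simp
        rw [e2] at h
        linarith
      have hobj' : x none * DualObj τ r pStar
          < ∑ s, ∑ a, x (some (Sum.inl (s, a))) * ∑ s', τ s a s' * r s a s' := by
        simp only [Fintype.sum_option, Fintype.sum_sum_type, Fintype.sum_prod_type,
          Option.elim_none, Option.elim_some, Sum.elim_inl, Sum.elim_inr,
          mul_zero, Finset.sum_const_zero, add_zero, mul_neg] at hobj
        linarith
      rcases eq_or_lt_of_le hμ0 with hμz | hμpos
      · -- vanishing multiplier on the objective row: the certificate is a
        -- nonnegative solution of a homogeneous equation, hence zero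
        have hT : ∑ s0, ∑ a, x (some (Sum.inl (s0, a)))
            = γ * ∑ s, ∑ a, x (some (Sum.inl (s, a))) := by
          calc ∑ s0, ∑ a, x (some (Sum.inl (s0, a)))
              = ∑ s0, (x none * ((1 - γ) * ι s0)
                  + γ * ∑ s, ∑ a, x (some (Sum.inl (s, a))) * τ s a s0) :=
                Finset.sum_congr rfl fun s0 _ => hrowS s0
            _ = γ * ∑ s0, ∑ s, ∑ a, x (some (Sum.inl (s, a))) * τ s a s0 := by
                rw [← hμz]
                simp [Finset.mul_sum]
            _ = γ * ∑ s, ∑ a, x (some (Sum.inl (s, a))) * ∑ s0, τ s a s0 := by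
                congr 1
                rw [Finset.sum_comm]
                refine Finset.sum_congr rfl fun s _ => ?_
                rw [Finset.sum_comm]
                refine Finset.sum_congr rfl fun a _ => ?_
                rw [Finset.mul_sum]
            _ = γ * ∑ s, ∑ a, x (some (Sum.inl (s, a))) := by
                congr 1
                refine Finset.sum_congr rfl fun s _ =>
                  Finset.sum_congr rfl fun a _ => ?_
                rw [hτ1 s a, mul_one]
        have h1 : (1 - γ) * ∑ s, ∑ a, x (some (Sum.inl (s, a))) = 0 := by
          linear_combination hT
        have hTz : ∑ s, ∑ a, x (some (Sum.inl (s, a))) = 0 :=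
          (mul_eq_zero.mp h1).resolve_left (ne_of_gt hγpos)
        have h2 := (Finset.sum_eq_zero_iff_of_nonneg
          (fun s _ => Finset.sum_nonneg fun a _ => hx0 _)).mp hTz
        have hRz : ∑ s, ∑ a, x (some (Sum.inl (s, a)))
            * ∑ s', τ s a s' * r s a s' = 0 := by
          refine Finset.sum_eq_zero fun s _ => Finset.sum_eq_zero fun a _ => ?_
          have h3 := (Finset.sum_eq_zero_iff_of_nonneg
            (fun a _ => hx0 _)).mp (h2 s (Finset.mem_univ s))
          rw [h3 a (Finset.mem_univ a), zero_mul]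
        rw [← hμz, hRz] at hobj'
        simp at hobj'
      · -- positive multiplier: rescale the certificate to a dual feasible point
        -- beating the dual optimum, contradiction
        have hμne : x none ≠ 0 := ne_of_gt hμpos
        have hfeas : DualFeas ι τ γ
            (fun s => ∑ a, x (some (Sum.inl (s, a))) / x none)
            (fun s a => x (some (Sum.inl (s, a))) / x none) := by
          refine ⟨fun s => rfl, ?_, fun s a => div_nonneg (hx0 _) (le_of_lt hμpos)⟩
          intro s0
          show ∑ a, x (some (Sum.inl (s0, a))) / x none
            = (1 - γ) * ι s0 + γ * ∑ s, ∑ a,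
                (x (some (Sum.inl (s, a))) / x none) * τ s a s0
          have eL : ∑ a, x (some (Sum.inl (s0, a))) / x none
              = (∑ a, x (some (Sum.inl (s0, a)))) / x none :=
            (Finset.sum_div ..).symm
          have eR : ∑ s, ∑ a, (x (some (Sum.inl (s, a))) / x none) * τ s a s0
              = (∑ s, ∑ a, x (some (Sum.inl (s, a))) * τ s a s0) / x none := by
            rw [Finset.sum_div]
            refine Finset.sum_congr rfl fun s _ => ?_
            rw [Finset.sum_div]
            exact Finset.sum_congr rfl fun a _ => div_mul_eq_mul_div ..
          rw [eL, eR, hrowS s0]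
          field_simp
        have hconstr : ∀ k, (1 - γ) * V k ≤ DualObj τ (rk k)
            (fun s a => x (some (Sum.inl (s, a))) / x none) := by
          intro k
          have eD : DualObj τ (rk k)
              (fun s a => x (some (Sum.inl (s, a))) / x none)
              = (∑ s, ∑ a, x (some (Sum.inl (s, a)))
                  * ∑ s', τ s a s' * rk k s a s') / x none := by
            unfold DualObj
            rw [Finset.sum_div]
            refine Finset.sum_congr rfl fun s _ => ?_
            rw [Finset.sum_div]
            exact Finset.sum_congr rfl fun a _ => div_mul_eq_mul_div ..
          rw [eD, hrowK k, le_div_iff₀ hμpos]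
          have hz0 : 0 ≤ x (some (Sum.inr k)) := hx0 _
          nlinarith
        have hle := hDOpt _ _ ⟨hfeas, hconstr⟩
        have eDr : DualObj τ r (fun s a => x (some (Sum.inl (s, a))) / x none)
            = (∑ s, ∑ a, x (some (Sum.inl (s, a)))
                * ∑ s', τ s a s' * r s a s') / x none := by
          unfold DualObj
          rw [Finset.sum_div]
          refine Finset.sum_congr rfl fun s _ => ?_
          rw [Finset.sum_div]
          exact Finset.sum_congr rfl fun a _ => div_mul_eq_mul_div ..
        rw [eDr, div_le_iff₀ hμpos] at hle
        nlinarith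
  -- Step 2: weak duality with the optimal pair, then complementary slackness
  have hW := weak_duality ι τ γ r rk dStar pStar vStar qStar wStar hd1 hd2 hp0 hq1 hq2
  have e3 : ∑ s, ι s * ((1 - γ) * vStar s) = (1 - γ) * ∑ s, ι s * vStar s := by
    rw [Finset.mul_sum]
    exact Finset.sum_congr rfl fun s _ => by ring
  have hsum0 : ∑ k, wStar k * (DualObj τ (rk k) pStar - (1 - γ) * V k) ≤ 0 := by
    have e4 : ∑ k, wStar k * (DualObj τ (rk k) pStar - (1 - γ) * V k)
        = (∑ k, wStar k * DualObj τ (rk k) pStar)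
          - ∑ k, wStar k * ((1 - γ) * V k) := by
      rw [← Finset.sum_sub_distrib]
      exact Finset.sum_congr rfl fun k _ => by ring
    rw [e4]
    linarith [hPD, hW, e3]
  have hterms : ∀ k ∈ Finset.univ,
      (0:ℝ) ≤ wStar k * (DualObj τ (rk k) pStar - (1 - γ) * V k) :=
    fun k _ => mul_nonneg (hw0 k) (by linarith [hDc k])
  have hzero := (Finset.sum_eq_zero_iff_of_nonneg hterms).mp
    (le_antisymm hsum0 (Finset.sum_nonneg hterms))
  intro k hk
  have hslack : 0 < DualObj τ (rk k) pStar - (1 - γ) * V k := by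
    have h1 : (1 - γ) * V k < (1 - γ) * ((1 - γ)⁻¹ * DualObj τ (rk k) pStar) :=
      mul_lt_mul_of_pos_left hk hγpos
    rw [← mul_assoc, mul_inv_cancel₀ (ne_of_gt hγpos), one_mul] at h1
    linarith
  rcases mul_eq_zero.mp (hzero k (Finset.mem_univ k)) with h | h
  · exact h
  · exact absurd h (ne_of_gt hslack)
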